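/- For every ε > 0, the Yosida regularization ln_ε of the logarithm is differentiable on ℝ, and its derivative satisfies ln_ε'(x) = 1/(ρ_ε(x) + ε) for all x ∈ ℝ. -/

import Mathlib

/-- For every ε > 0, the Yosida regularization `ln_ε(x) = (x − ρ_ε(x))/ε`
of the logarithm is differentiable on ℝ with derivative `ln_ε'(x) = 1/(ρ_ε(x) + ε)`,
where ρ_ε is the ε-resolvent of the logarithm, i.e. the inverse of
`x ↦ x + ε·log x : (0,∞) → ℝ`. -/
theorem stmt2 (ε : ℝ) (hε : 0 < ε) (ρ : ℝ → ℝ)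
    (hρ : ∀ x : ℝ, 0 < ρ x ∧ ρ x + ε * Real.log (ρ x) = x) (x : ℝ) :
    HasDerivAt (fun y : ℝ => (y - ρ y) / ε) (1 / (ρ x + ε)) x := by
  set f : ℝ → ℝ := fun t => t + ε * Real.log t with hf
  -- f is strictly monotone on positives
  have hfmono : ∀ s t : ℝ, 0 < s → 0 < t → s < t → f s < f t := by
    intro s t hs ht hst
    have : Real.log s < Real.log t := Real.log_lt_log hs hst
    simp only [hf]
    nlinarith
  -- ρ is monotone
  have hmono : Monotone ρ := by
    intro a b hab
    by_contra h
    push_neg at h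
    have := hfmono _ _ (hρ b).1 (hρ a).1 h
    rw [hf] at this
    simp only [(hρ a).2, (hρ b).2] at this
    linarith
  -- ρ is a left inverse on positives: ρ (f t) = t for t > 0
  have hleft : ∀ t : ℝ, 0 < t → ρ (f t) = t := by
    intro t ht
    rcases lt_trichotomy (ρ (f t)) t with h | h | h
    · have := hfmono _ _ (hρ (f t)).1 ht h
      rw [hf] at this
      simp only [(hρ (f t)).2] at this
      have h2 := (hρ (f t)).2
      simp only [hf] at h2
      linarith
    · exact h
    · have := hfmono _ _ ht (hρ (f t)).1 h
      rw [hf] at this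
      simp only [(hρ (f t)).2] at this
      have h2 := (hρ (f t)).2
      simp only [hf] at h2
      linarith
  -- ρ is continuous at x
  have himg : ρ '' Set.univ ∈ nhds (ρ x) := by
    have hsub : Set.Ioi (0:ℝ) ⊆ ρ '' Set.univ := by
      intro t ht
      exact ⟨f t, Set.mem_univ _, hleft t ht⟩
    exact Filter.mem_of_superset (Ioi_mem_nhds (hρ x).1) hsub
  have hcont : ContinuousAt ρ x :=
    continuousAt_of_monotoneOn_of_image_mem_nhds (fun a _ b _ hab => hmono hab)
      Filter.univ_mem himg
  -- derivative of f at ρ x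
  have hρx : (0:ℝ) < ρ x := (hρ x).1
  have hfd : HasDerivAt f (1 + ε * (ρ x)⁻¹) (ρ x) :=
    (hasDerivAt_id (ρ x)).add ((Real.hasDerivAt_log hρx.ne').const_mul ε)
  have hne : (1 + ε * (ρ x)⁻¹) ≠ 0 := by positivity
  have hfg : ∀ᶠ y in nhds x, f (ρ y) = y :=
    Filter.Eventually.of_forall fun y => by
      simp only [hf]; exact (hρ y).2
  have hρd : HasDerivAt ρ (1 + ε * (ρ x)⁻¹)⁻¹ x :=
    HasDerivAt.of_local_left_inverse hcont hfd hne hfg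
  have := ((hasDerivAt_id x).sub hρd).div_const ε
  refine HasDerivAt.congr_deriv this ?_
  field_simp
  ring
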